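/- Let $(X,\rho)$ be a compact metric space, $T\colon X\to X$ continuous, $d\ge 2$, and suppose the $d$-fold product map $T_d=T\times\cdots\times T$ on $X^d$ admits a conservative non-atomic product measure $\lambda_d=\lambda^{\otimes d}$ with $\lambda$ fully supported and non-atomic. Then the set of asymptotic $d$-tuples, i.e. tuples $(x_1,\dots,x_d)$ with $\lim_n\max_{i,j}\rho(T^nx_i,T^nx_j)=0$, has $\lambda_d$-measure zero. -/

import Mathlib

open MeasureTheory Filter ENNReal Set

theorem stmt8 {X : Type*} [MetricSpace X] [CompactSpace X]
    [MeasurableSpace X] [BorelSpace X]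
    (T : X → X) (hT : Continuous T)
    (lam : Measure X) [IsProbabilityMeasure lam] [NullSingletonClass lam]
    (hsupp : ∀ U : Set X, IsOpen U → U.Nonempty → 0 < lam U)
    (d : ℕ) (hd : 2 ≤ d)
    (hcons : ∀ A : Set (Fin d → X), MeasurableSet A →
      0 < (Measure.pi fun _ : Fin d => lam) A →
      ∃ n : ℕ, 0 < n ∧
        0 < (Measure.pi fun _ : Fin d => lam)
          (A ∩ (fun y : Fin d → X => fun i => T (y i))^[n] '' A)) :
    (Measure.pi fun _ : Fin d => lam) {x : Fin d → X |
      Tendsto (fun n => ⨆ i : Fin d, ⨆ j : Fin d,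
        dist (T^[n] (x i)) (T^[n] (x j))) atTop (nhds 0)} = 0 := by
  classical
  set μ : Measure (Fin d → X) := Measure.pi fun _ : Fin d => lam with hμdef
  have hdpos : 0 < d := lt_of_lt_of_le two_pos hd
  haveI : NeZero d := ⟨hdpos.ne'⟩
  set Td : (Fin d → X) → (Fin d → X) := fun y i => T (y i) with hTddef
  have hTdc : Continuous Td := continuous_pi fun i => hT.comp (continuous_apply i)
  have hTdit : ∀ n (x : Fin d → X) (i : Fin d), Td^[n] x i = T^[n] (x i) := by
    intro n
    induction n with
    | zero => simp
    | succ n ih =>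
      intro x i
      rw [Function.iterate_succ_apply', Function.iterate_succ_apply']
      show T (Td^[n] x i) = _
      rw [ih]
  set F : ℕ → (Fin d → X) → ℝ := fun n x =>
    ⨆ i : Fin d, ⨆ j : Fin d, dist (T^[n] (x i)) (T^[n] (x j)) with hFdef
  have hFm : ∀ n, Measurable (F n) := by
    intro n
    apply Measurable.iSup
    intro i
    apply Measurable.iSup
    intro j
    exact (((hT.iterate n).comp (continuous_apply i)).dist
      ((hT.iterate n).comp (continuous_apply j))).measurable
  set A : Set (Fin d → X) := {x | Tendsto (fun n => F n x) atTop (nhds 0)} with hAdef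
  have hAm : MeasurableSet A := measurableSet_tendsto _ hFm
  have hdistF : ∀ n (x : Fin d → X) (i j : Fin d),
      dist (T^[n] (x i)) (T^[n] (x j)) ≤ F n x := by
    intro n x i j
    have h1 : dist (T^[n] (x i)) (T^[n] (x j))
        ≤ ⨆ j' : Fin d, dist (T^[n] (x i)) (T^[n] (x j')) :=
      le_ciSup (Set.Finite.bddAbove (Set.finite_range
        (fun j' : Fin d => dist (T^[n] (x i)) (T^[n] (x j'))))) j
    have h2 : (⨆ j' : Fin d, dist (T^[n] (x i)) (T^[n] (x j'))) ≤ F n x :=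
      le_ciSup (Set.Finite.bddAbove (Set.finite_range
        (fun i' : Fin d => ⨆ j' : Fin d, dist (T^[n] (x i')) (T^[n] (x j'))))) i
    exact h1.trans h2
  show μ A = 0
  by_contra hA0
  have hApos : 0 < μ A := pos_iff_ne_zero.mpr hA0
  -- diagonal neighbourhoods
  set D : ℕ → Set (Fin d → X) := fun k => {x | ∀ i j : Fin d, dist (x i) (x j) ≤ 1 / (k + 1)}
    with hDdef
  have hDclosed : ∀ k, IsClosed (D k) := by
    intro k
    have : D k = ⋂ (i : Fin d) (j : Fin d),
        {x : Fin d → X | dist (x i) (x j) ≤ 1 / (k + 1)} := by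
      ext x; simp [hDdef, Set.mem_iInter]
    rw [this]
    exact isClosed_iInter fun i => isClosed_iInter fun j =>
      isClosed_le ((continuous_apply i).dist (continuous_apply j)) continuous_const
  have hDanti : Antitone D := by
    intro k l hkl x hx i j
    refine le_trans (hx i j) ?_
    apply one_div_le_one_div_of_le
    · positivity
    · exact_mod_cast Nat.add_le_add_right hkl 1
  -- the diagonal has measure zero
  set i0 : Fin d := ⟨0, hdpos⟩
  set i1 : Fin d := ⟨1, lt_of_lt_of_le one_lt_two hd⟩
  have hne : i0 ≠ i1 := by simp [i0, i1, Fin.ext_iff]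
  have hpair : μ {x : Fin d → X | x i0 = x i1} = 0 := by
    set g : (Fin d → X) → X × X := fun x => (x i0, x i1) with hgdef
    have hgm : Measurable g := (measurable_pi_apply i0).prodMk (measurable_pi_apply i1)
    have hmap : lam.prod lam = μ.map g := by
      refine Measure.prod_eq fun s t hs ht => ?_
      rw [Measure.map_apply hgm (hs.prod ht)]
      have : g ⁻¹' (s ×ˢ t) = Set.pi Set.univ
          (fun i : Fin d => if i = i0 then s else if i = i1 then t else Set.univ) := by
        ext x
        simp only [Set.mem_preimage, Set.mem_prod, Set.mem_pi, Set.mem_univ, true_imp_iff, hgdef]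
        constructor
        · rintro ⟨h1, h2⟩ i
          by_cases h : i = i0
          · subst h; simp [if_neg, h1]
          · by_cases h' : i = i1
            · subst h'; simp [if_neg h, h2]
            · simp [h, h']
        · intro h
          constructor
          · have := h i0; simpa using this
          · have := h i1; simpa [if_neg (Ne.symm hne)] using this
      rw [this, Measure.pi_pi]
      rw [show (Finset.univ : Finset (Fin d)) = insert i0 (insert i1 (Finset.univ \ {i0, i1}))
        by
          ext i
          simp only [Finset.mem_insert, Finset.mem_sdiff, Finset.mem_univ, Finset.mem_singleton,
            true_and]
          by_cases h : i = i0 <;> by_cases h' : i = i1 <;> simp [h, h']]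
      rw [Finset.prod_insert, Finset.prod_insert]
      · have h1 : ∀ i ∈ Finset.univ \ ({i0, i1} : Finset (Fin d)),
            lam (if i = i0 then s else if i = i1 then t else Set.univ) = 1 := by
          intro i hi
          simp only [Finset.mem_sdiff, Finset.mem_insert, Finset.mem_singleton] at hi
          push_neg at hi
          simp [hi.2.1, hi.2.2, measure_univ]
        rw [Finset.prod_congr rfl h1]
        simp [if_neg (Ne.symm hne), mul_assoc]
      · simp
      · simp
        exact hne
    have hdiagm : MeasurableSet {p : X × X | p.1 = p.2} :=
      isClosed_diagonal.measurableSet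
    have : lam.prod lam {p : X × X | p.1 = p.2} = 0 := by
      rw [Measure.prod_apply hdiagm]
      have : ∀ x : X, lam (Prod.mk x ⁻¹' {p : X × X | p.1 = p.2}) = 0 := by
        intro x
        have : Prod.mk x ⁻¹' {p : X × X | p.1 = p.2} = {x} := by
          ext y; simp [eq_comm]
        rw [this]
        exact measure_singleton x
      simp [this]
    have := hmap ▸ this
    rwa [Measure.map_apply hgm hdiagm] at this
  have hDinter : μ (⋂ k, D k) = 0 := by
    refine measure_mono_null ?_ hpair
    intro x hx
    simp only [Set.mem_iInter, hDdef, Set.mem_setOf_eq] at hx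
    have : dist (x i0) (x i1) ≤ 0 := by
      by_contra h
      push_neg at h
      obtain ⟨k, hk⟩ := exists_nat_one_div_lt h
      exact absurd (hx k i0 i1) (by push_cast; linarith)
    exact dist_le_zero.mp this
  have htend : Tendsto (μ ∘ D) atTop (nhds 0) := by
    have := tendsto_measure_iInter_atTop
      (fun k => (hDclosed k).measurableSet.nullMeasurableSet) hDanti ⟨0, measure_ne_top μ _⟩
    rwa [hDinter] at this
  obtain ⟨k, hk⟩ : ∃ k, μ (D k) < μ A :=
    (htend.eventually_lt_const hApos).exists
  set ε : ℝ := 1 / (k + 1) with hεdef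
  have hεpos : 0 < ε := by positivity
  -- A' = A minus the ε-neighbourhood of the diagonal
  set A' : Set (Fin d → X) := A \ D k with hA'def
  have hA'm : MeasurableSet A' := hAm.diff (hDclosed k).measurableSet
  have hA'pos : 0 < μ A' := by
    by_contra h
    push_neg at h
    have h0 : μ A' = 0 := le_antisymm h (zero_le)
    have : μ A ≤ μ A' + μ (D k) :=
      le_trans (measure_mono (by intro x hx; by_cases hxD : x ∈ D k <;>
        [exact Set.mem_union_right _ hxD; exact Set.mem_union_left _ ⟨hx, hxD⟩]))
        (measure_union_le _ _)
    rw [h0, zero_add] at this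
    exact absurd (lt_of_le_of_lt this hk) (lt_irrefl _)
  -- decomposition of A' by the time N after which F n x ≤ ε
  set B : ℕ → Set (Fin d → X) := fun N => {x ∈ A' | ∀ n, N ≤ n → F n x ≤ ε} with hBdef
  have hBm : ∀ N, MeasurableSet (B N) := by
    intro N
    have : B N = A' ∩ ⋂ (n : ℕ), ⋂ (_ : N ≤ n), {x | F n x ≤ ε} := by
      ext x; simp [hBdef, Set.mem_iInter]
    rw [this]
    exact hA'm.inter (MeasurableSet.iInter fun n => MeasurableSet.iInter fun _ =>
      measurableSet_le (hFm n) measurable_const)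
  have hA'sub : A' ⊆ ⋃ N, B N := by
    intro x hx
    have hxA : x ∈ A := hx.1
    have : ∀ᶠ n in atTop, F n x < ε := hxA.eventually_lt_const hεpos
    obtain ⟨N, hN⟩ := eventually_atTop.mp this
    exact Set.mem_iUnion.mpr ⟨N, hx, fun n hn => (hN n hn).le⟩
  obtain ⟨N, hN⟩ : ∃ N, 0 < μ (B N) := by
    by_contra h
    push_neg at h
    have : μ (⋃ N, B N) = 0 :=
      measure_iUnion_null fun N => le_antisymm (h N) (zero_le)
    exact absurd (lt_of_lt_of_le hA'pos (measure_mono hA'sub)) (by rw [this]; exact lt_irrefl _)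
  -- compact subset
  obtain ⟨K, hKB, hKcl, hKpos⟩ :=
    (hBm N).exists_lt_isClosed_of_ne_top (measure_ne_top μ _) hN
  have hKcomp : IsCompact K := hKcl.isCompact
  -- iteration of conservativity
  have hiter : ∀ m : ℕ, ∃ K' : Set (Fin d → X), IsCompact K' ∧ 0 < μ K' ∧ K' ⊆ K ∧
      ∃ n : ℕ, m ≤ n ∧ K' ⊆ Td^[n] '' K := by
    intro m
    induction m with
    | zero => exact ⟨K, hKcomp, hKpos, Set.Subset.rfl, 0, le_refl 0, by simp⟩
    | succ m ih =>
      obtain ⟨K', hK'c, hK'pos, hK'K, n, hmn, hK'im⟩ := ih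
      obtain ⟨p, hppos, hpmeas⟩ := hcons K' hK'c.isClosed.measurableSet hK'pos
      refine ⟨K' ∩ Td^[p] '' K', hK'c.inter_right ?_, hpmeas, fun x hx => hK'K hx.1,
        n + p, by omega, ?_⟩
      · exact ((hK'c.image (hTdc.iterate p)).isClosed)
      · intro x hx
        obtain ⟨y, hy, rfl⟩ := hx.2
        obtain ⟨z, hz, rfl⟩ := hK'im hy
        exact ⟨z, hz, by rw [← Function.iterate_add_apply]; ring_nf⟩
  obtain ⟨K', hK'c, hK'pos, hK'K, n, hmn, hK'im⟩ := hiter N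
  -- contradiction : K' ⊆ D k but K' ⊆ K ⊆ A' which is disjoint from D k
  have hK'D : K' ⊆ D k := by
    intro x hx
    obtain ⟨z, hz, rfl⟩ := hK'im hx
    intro i j
    have hzB : z ∈ B N := hKB hz
    have := hzB.2 n hmn
    calc dist (Td^[n] z i) (Td^[n] z j)
        = dist (T^[n] (z i)) (T^[n] (z j)) := by rw [hTdit, hTdit]
      _ ≤ F n z := hdistF n z i j
      _ ≤ ε := this
  obtain ⟨x, hx⟩ := nonempty_of_measure_ne_zero hK'pos.ne'
  exact (hKB (hK'K hx)).1.2 (hK'D hx)
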